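/- Let X be an invertible n×n complex cross matrix, and for each 0-based index j set α_j = X j j · X (n-1-j) (n-1-j) − X j (n-1-j) · X (n-1-j) j. Then the entries of X⁻¹ are given by: (X⁻¹) j j = X (n-1-j) (n-1-j) / α_j whenever (2j + 1 : ℕ) ≠ n; (X⁻¹) (n-1-j) j = − X (n-1-j) j / α_j whenever (2j + 1 : ℕ) ≠ n; and if n = 2k+1 then (X⁻¹) k k = 1 / (X k k); all other entries of X⁻¹ are zero. -/
import Mathlib

open Matrix


/-- An `n × n` complex matrix is a *cross matrix* if its nonzero entries lie
only on the main diagonal and the anti-diagonal (0-based indices). -/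
def IsCrossMatrix {n : ℕ} (X : Matrix (Fin n) (Fin n) ℂ) : Prop :=
  ∀ i j : Fin n, j ≠ i → (i : ℕ) + (j : ℕ) + 1 ≠ n → X i j = 0

/-- Explicit formula for the inverse of an invertible cross matrix.  With
`α_j = X j j * X (n-1-j) (n-1-j) - X j (n-1-j) * X (n-1-j) j` (where the index
`n - 1 - j` is `j.rev`), the diagonal entry of the inverse is
`X (n-1-j) (n-1-j) / α_j`, the anti-diagonal entry is `- X (n-1-j) j / α_j`,
the central entry (when `n` is odd) is `1 / X k k`, and all other entries
vanish. -/
theorem crossMatrix_inv_entries {n : ℕ}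
    (X : Matrix (Fin n) (Fin n) ℂ) (hX : IsCrossMatrix X) (h : IsUnit X) :
    (∀ j : Fin n, 2 * (j : ℕ) + 1 ≠ n →
      X⁻¹ j j =
        X j.rev j.rev / (X j j * X j.rev j.rev - X j j.rev * X j.rev j)) ∧
    (∀ j : Fin n, 2 * (j : ℕ) + 1 ≠ n →
      X⁻¹ j.rev j =
        -X j.rev j / (X j j * X j.rev j.rev - X j j.rev * X j.rev j)) ∧
    (∀ j : Fin n, 2 * (j : ℕ) + 1 = n → X⁻¹ j j = 1 / X j j) ∧
    (∀ i j : Fin n, j ≠ i → (i : ℕ) + (j : ℕ) + 1 ≠ n → X⁻¹ i j = 0) := by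
  classical
  set α : Fin n → ℂ := fun j => X j j * X j.rev j.rev - X j j.rev * X j.rev j with hα
  -- basic facts about rev
  have hrevsum : ∀ i : Fin n, (i : ℕ) + (i.rev : ℕ) + 1 = n := by
    intro i
    have h1 := Fin.val_rev i
    have h2 := i.isLt
    omega
  have hreveq : ∀ j : Fin n, j.rev = j ↔ 2 * (j : ℕ) + 1 = n := by
    intro j
    constructor
    · intro hj
      have := hrevsum j
      rw [hj] at this
      omega
    · intro hj
      have h1 := hrevsum j
      exact Fin.ext (by omega)
  have hrevrev : ∀ j : Fin n, j.rev.rev = j := fun j => Fin.rev_rev j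
  have hrow : ∀ i c : Fin n, c ≠ i → c ≠ i.rev → X i c = 0 := by
    intro i c h1 h2
    refine hX i c h1 (fun hc => h2 (Fin.ext ?_))
    have := hrevsum i
    omega
  -- injectivity of vecMul
  obtain ⟨u, hu⟩ := h
  have hright : X * (↑u⁻¹ : Matrix (Fin n) (Fin n) ℂ) = 1 := by
    rw [← hu]; exact u.mul_inv
  have hinj : ∀ v : Fin n → ℂ, v ᵥ* X = 0 → v = 0 := by
    intro v hv
    have : v ᵥ* (X * (↑u⁻¹ : Matrix (Fin n) (Fin n) ℂ)) = 0 := by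
      rw [← Matrix.vecMul_vecMul, hv, Matrix.zero_vecMul]
    rwa [hright, Matrix.vecMul_one] at this
  -- vecMul of a two-point vector
  have hvm2 : ∀ (j r : Fin n) (hjr : j ≠ r) (a b : ℂ) (c : Fin n),
      ((Pi.single j a + Pi.single r b) ᵥ* X) c = a * X j c + b * X r c := by
    intro j r hjr a b c
    simp [Matrix.vecMul, dotProduct, add_mul, Finset.sum_add_distrib,
      Pi.single_apply, ite_mul, Finset.sum_ite_eq']
  -- α is nonzero away from the centre
  have hαne : ∀ j : Fin n, j.rev ≠ j → α j ≠ 0 := by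
    intro j hj hzero
    simp only [hα] at hzero
    -- find a nontrivial dependence between rows j and j.rev
    have hdep : ∃ a b : ℂ, (a ≠ 0 ∨ b ≠ 0) ∧ a * X j j + b * X j.rev j = 0 ∧
        a * X j j.rev + b * X j.rev j.rev = 0 := by
      by_cases h1 : X j.rev j.rev = 0 ∧ X j j.rev = 0
      · by_cases h2 : X j j = 0 ∧ X j.rev j = 0
        · exact ⟨1, 0, Or.inl one_ne_zero, by simp [h2.1], by simp [h1.2]⟩
        · refine ⟨X j.rev j, -X j j, ?_, by ring, by rw [h1.1, h1.2]; ring⟩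
          rcases not_and_or.mp h2 with h | h
          · exact Or.inr (neg_ne_zero.mpr h)
          · exact Or.inl h
      · refine ⟨X j.rev j.rev, -X j j.rev, ?_, by linear_combination hzero, by ring⟩
        rcases not_and_or.mp h1 with h | h
        · exact Or.inl h
        · exact Or.inr (neg_ne_zero.mpr h)
    obtain ⟨a, b, hab, e1, e2⟩ := hdep
    have hvz : (Pi.single j a + Pi.single j.rev b) ᵥ* X = 0 := by
      funext c
      rw [hvm2 j j.rev (fun hc => hj hc.symm) a b c]
      by_cases hc1 : c = j
      · subst hc1; simpa using e1
      · by_cases hc2 : c = j.rev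
        · subst hc2; simpa using e2
        · rw [hrow j c hc1 hc2, hrow j.rev c hc2 (by rwa [hrevrev])]
          simp
    have hv0 := hinj _ hvz
    have hjne : ¬ j = j.rev := fun hc => hj hc.symm
    have ha : a = 0 := by
      have := congrFun hv0 j
      simpa [Pi.single_apply, hjne] using this
    have hb : b = 0 := by
      have := congrFun hv0 j.rev
      simpa [Pi.single_apply, hj] using this
    rcases hab with h | h <;> [exact h ha; exact h hb]
  -- the centre entry is nonzero
  have hcen : ∀ k : Fin n, k.rev = k → X k k ≠ 0 := by
    intro k hk hzero
    have hvz : (Pi.single k (1:ℂ)) ᵥ* X = 0 := by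
      funext c
      have : ((Pi.single k (1:ℂ)) ᵥ* X) c = X k c := by
        simp [Matrix.vecMul, dotProduct, Pi.single_apply, ite_mul, Finset.sum_ite_eq']
      rw [this]
      by_cases hc : c = k
      · subst hc; exact hzero
      · exact hrow k c hc (by rwa [hk])
    have := congrFun (hinj _ hvz) k
    simp at this
  -- symmetry of α
  have hαsym : ∀ j : Fin n, α j.rev = α j := by
    intro j
    simp only [hα, hrevrev]
    ring
  -- the candidate inverse
  set B : Matrix (Fin n) (Fin n) ℂ := fun i c =>
    if c = i then (if i.rev = i then 1 / X i i else X i.rev i.rev / α i)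
    else if c = i.rev then -X i c / α i else 0 with hB
  have hXB : X * B = 1 := by
    ext i c
    rw [Matrix.mul_apply]
    by_cases hi : i.rev = i
    · rw [Finset.sum_eq_single i (fun b _ hb => by
        rw [hrow i b hb (by rwa [hi]), zero_mul]) (by simp)]
      by_cases hc : c = i
      · subst hc
        simp only [hB, if_pos rfl, if_pos hi, Matrix.one_apply_eq]
        rw [mul_one_div]
        exact div_self (hcen c hi)
      · simp only [hB, if_neg hc, hi, if_neg hc, mul_zero,
          Matrix.one_apply_ne (Ne.symm hc)]
    · rw [Finset.sum_eq_add i i.rev (fun hh => hi hh.symm)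
        (fun b _ hb => by rw [hrow i b hb.1 hb.2, zero_mul])
        (by simp) (by simp)]
      by_cases hc : c = i
      · subst hc
        have e1 : B c c = X c.rev c.rev / α c := by
          simp only [hB]; rw [if_true, if_neg hi]
        have e2 : B c.rev c = -X c.rev c / α c := by
          simp only [hB]
          rw [if_neg (fun hh : c = c.rev => hi hh.symm),
            if_pos (hrevrev c).symm, hαsym]
        rw [e1, e2, Matrix.one_apply_eq]
        have hne := hαne c hi
        field_simp
        simp only [hα]
        ring
      · by_cases hc2 : c = i.rev
        · subst hc2
          have e1 : B i i.rev = -X i i.rev / α i := by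
            simp only [hB]; rw [if_neg hi, if_true]
          have e2 : B i.rev i.rev = X i i / α i := by
            simp only [hB]
            rw [if_true,
              if_neg (show ¬ i.rev.rev = i.rev by
                rw [hrevrev]; exact fun hh => hi hh.symm),
              hrevrev, hαsym]
          rw [e1, e2, Matrix.one_apply_ne (Ne.symm hc)]
          ring
        · have hc3 : ¬ (c = i.rev.rev) := by rwa [hrevrev]
          simp only [hB, if_neg hc, if_neg hc2, if_neg hc3, mul_zero, add_zero,
            Matrix.one_apply_ne (Ne.symm hc)]
  have hXinv : X⁻¹ = B := Matrix.inv_eq_right_inv hXB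
  refine ⟨?_, ?_, ?_, ?_⟩
  · intro j hj
    have hjr : ¬ (j.rev = j) := fun hh => hj ((hreveq j).mp hh)
    rw [hXinv]
    simp only [hB, if_pos rfl, if_neg hjr, hα]
  · intro j hj
    have hjr : ¬ (j.rev = j) := fun hh => hj ((hreveq j).mp hh)
    have hjr2 : ¬ (j = j.rev) := fun hh => hjr hh.symm
    rw [hXinv]
    show (if j = j.rev then _ else if j = j.rev.rev then -X j.rev j / α j.rev else 0) = _
    rw [if_neg hjr2, if_pos (hrevrev j).symm, hαsym]
  · intro j hj
    have hjr : j.rev = j := (hreveq j).mpr hj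
    rw [hXinv]
    simp only [hB, if_pos rfl, if_pos hjr]
  · intro i j hji hsum
    have hj2 : j ≠ i.rev := by
      intro hh
      apply hsum
      rw [hh]
      exact hrevsum i
    rw [hXinv]
    simp only [hB, if_neg hji, if_neg hj2]
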